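/- arXiv:1509.06430 — 2 statements merged into one kernel-verified Lean document; each statement's English description precedes it below -/
import Mathlib

section
/- Suppose the probabilities P_Ω satisfy the Shearer criterion. Given distinct bad events B_1, …, B_s, the total weight of all (isomorphism classes of) witness DAGs having exactly s sink nodes labeled B_1, …, B_s is at most Π_{i=1}^{s} μ(B_i). -/
open scoped BigOperators ENNReal Classical

namespace LLL

/-- Two bad events are dependent iff their variable sets intersect. -/
def Dep {n : ℕ} {E : Type} (S : E → Finset (Fin n)) (b b' : E) : Prop :=
  (S b ∩ S b').Nonempty

/-- A witness DAG: a finite DAG with nodes labeled by bad events, where any two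
nodes with dependent labels are joined by an edge (in one direction), and nodes
with non-dependent labels have no edge. -/
structure WDag (n : ℕ) (E : Type) (S : E → Finset (Fin n)) where
  size : ℕ
  label : Fin size → E
  edge : Fin size → Fin size → Prop
  acyclic : ∀ v, ¬ Relation.TransGen edge v v
  edge_dep : ∀ v w, edge v w → Dep S (label v) (label w)
  dep_edge : ∀ v w, v ≠ w → Dep S (label v) (label w) → edge v w ∨ edge w v

namespace WDag

variable {n : ℕ} {E : Type} {S : E → Finset (Fin n)}

/-- Isomorphism of witness DAGs. -/
def Iso (G G' : WDag n E S) : Prop :=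
  ∃ e : Fin G.size ≃ Fin G'.size,
    (∀ v, G'.label (e v) = G.label v) ∧ ∀ v w, G'.edge (e v) (e w) ↔ G.edge v w

theorem Iso.refl (G : WDag n E S) : Iso G G :=
  ⟨Equiv.refl _, fun _ => rfl, fun _ _ => Iff.rfl⟩

theorem Iso.symm {G G' : WDag n E S} (h : Iso G G') : Iso G' G := by
  obtain ⟨e, hl, he⟩ := h
  refine ⟨e.symm, fun v => ?_, fun v w => ?_⟩
  · simpa using (hl (e.symm v)).symm
  · simpa using (he (e.symm v) (e.symm w)).symm

theorem Iso.trans {G₁ G₂ G₃ : WDag n E S} (h12 : Iso G₁ G₂) (h23 : Iso G₂ G₃) :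
    Iso G₁ G₃ := by
  obtain ⟨e, hl, he⟩ := h12
  obtain ⟨f, hl', he'⟩ := h23
  refine ⟨e.trans f, fun v => ?_, fun v w => ?_⟩
  · rw [Equiv.trans_apply, hl' (e v), hl v]
  · rw [Equiv.trans_apply, Equiv.trans_apply, he' (e v) (e w), he v w]

instance wdSetoid (n : ℕ) (E : Type) (S : E → Finset (Fin n)) : Setoid (WDag n E S) :=
  ⟨Iso, ⟨Iso.refl, Iso.symm, Iso.trans⟩⟩

/-- Isomorphism classes of witness DAGs. -/
def WClass (n : ℕ) (E : Type) (S : E → Finset (Fin n)) : Type :=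
  Quotient (wdSetoid n E S)

/-- The weight of a witness DAG: the product of the probabilities of its labels. -/
noncomputable def wt (P : E → ℝ) (G : WDag n E S) : ℝ := ∏ v, P (G.label v)

theorem wt_invariant (P : E → ℝ) {G G' : WDag n E S} (h : Iso G G') :
    wt P G = wt P G' := by
  obtain ⟨e, hl, _⟩ := h
  exact Fintype.prod_equiv e (fun v => P (G.label v)) (fun v => P (G'.label v))
    (fun v => by simp only [hl v])

/-- The weight, as a function on isomorphism classes. -/
noncomputable def cwt (P : E → ℝ) : WClass n E S → ℝ :=
  Quotient.lift (wt P) fun _ _ h => wt_invariant P h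

theorem size_invariant {G G' : WDag n E S} (h : Iso G G') : G.size = G'.size := by
  obtain ⟨e, -, -⟩ := h
  simpa using Fintype.card_congr e

/-- The adjusted weight `a_ρ(G) = w(G) (1+ρ)^{|G|}`. -/
noncomputable def awt (P : E → ℝ) (ρ : ℝ) (G : WDag n E S) : ℝ :=
  wt P G * (1 + ρ) ^ G.size

theorem awt_invariant (P : E → ℝ) (ρ : ℝ) {G G' : WDag n E S} (h : Iso G G') :
    awt P ρ G = awt P ρ G' := by
  unfold awt
  rw [wt_invariant P h, size_invariant h]

/-- The adjusted weight, as a function on isomorphism classes. -/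
noncomputable def cawt (P : E → ℝ) (ρ : ℝ) : WClass n E S → ℝ :=
  Quotient.lift (awt P ρ) fun _ _ h => awt_invariant P ρ h

/-- A node is a sink if it has no outgoing edge. -/
def IsSink (G : WDag n E S) (v : Fin G.size) : Prop := ∀ w, ¬ G.edge v w

/-- A witness DAG has a single sink. -/
def SingleSink (G : WDag n E S) : Prop := ∃! v, IsSink G v

/-- A witness DAG has a single sink, labeled by `b`. -/
def SinkLabeled (G : WDag n E S) (b : E) : Prop :=
  ∃ v, IsSink G v ∧ G.label v = b ∧ ∀ w, IsSink G w → w = v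

end WDag

/-- A set of bad events is independent if no two distinct members are dependent. -/
def Indep {n : ℕ} {E : Type} (S : E → Finset (Fin n)) (I : Finset E) : Prop :=
  ∀ b ∈ I, ∀ b' ∈ I, b ≠ b' → ¬ Dep S b b'

/-- The independent-set polynomial `Q(I,p)`. -/
noncomputable def Q {n : ℕ} {E : Type} [Fintype E] (S : E → Finset (Fin n))
    (p : E → ℝ) (I : Finset E) : ℝ :=
  ∑ J ∈ Finset.univ.filter (fun J : Finset E => I ⊆ J ∧ Indep S J),
    (-1 : ℝ) ^ (J.card - I.card) * ∏ b ∈ J, p b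

/-- The Shearer criterion for the probability vector `p`. -/
def Shearer {n : ℕ} {E : Type} [Fintype E] (S : E → Finset (Fin n)) (p : E → ℝ) : Prop :=
  0 < Q S p ∅ ∧ ∀ I : Finset E, Indep S I → 0 ≤ Q S p I


/-- A witness DAG has exactly the sinks `B 0, …, B (s-1)`. -/
def WDag.SinksAre {n : ℕ} {E : Type} {S : E → Finset (Fin n)} (G : WDag n E S)
    {s : ℕ} (B : Fin s → E) : Prop :=
  ∃ f : Fin s → Fin G.size,
    (∀ j, WDag.IsSink G (f j) ∧ G.label (f j) = B j) ∧
    ∀ v, WDag.IsSink G v → ∃ j, f j = v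

set_option linter.unusedSectionVars false

section Alg
variable {n : ℕ} {E : Type} [Fintype E] (S : E → Finset (Fin n)) (P : E → ℝ)

theorem dep_symm {b c : E} (h : Dep S b c) : Dep S c b := by
  unfold Dep at *; rwa [Finset.inter_comm]

theorem dep_self_of_dep {b c : E} (h : Dep S b c) : Dep S b b := by
  obtain ⟨x, hx⟩ := h
  exact ⟨x, by simp [Finset.mem_inter.mp hx]⟩

theorem indep_mono {I J : Finset E} (h : Indep S J) (hIJ : I ⊆ J) : Indep S I :=
  fun b hb b' hb' hne => h b (hIJ hb) b' (hIJ hb') hne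

theorem indep_singleton (b : E) : Indep S {b} := by
  intro x hx y hy hne
  simp only [Finset.mem_singleton] at hx hy
  exact absurd (hx.trans hy.symm) hne

theorem indep_empty : Indep S ∅ := fun b hb => absurd hb (Finset.notMem_empty b)

/-- Partial independence polynomial over ground set `T`. -/
noncomputable def ZP (T : Finset E) : ℝ :=
  ∑ K ∈ T.powerset.filter (fun K => Indep S K), (-1 : ℝ) ^ K.card * ∏ b ∈ K, P b

/-- Dependency neighborhood of a set. -/
noncomputable def NDep (I : Finset E) : Finset E :=
  Finset.univ.filter (fun b => ∃ c ∈ I, Dep S b c)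

noncomputable def NStar (I : Finset E) : Finset E := I ∪ NDep S I

/-- B1 : `Q(I) = (∏ p) Z(E \ N*(I))`. -/
theorem Q_eq_ZP (I : Finset E) (hI : Indep S I) :
    Q S P I = (∏ b ∈ I, P b) * ZP S P (Finset.univ \ NStar S I) := by
  unfold Q ZP
  rw [Finset.mul_sum]
  refine Finset.sum_bij' (fun J _ => J \ I) (fun K _ => I ∪ K) ?_ ?_ ?_ ?_ ?_
  · intro J hJ
    simp only [Finset.mem_filter, Finset.mem_univ, true_and] at hJ
    obtain ⟨hIJ, hJind⟩ := hJ
    simp only [Finset.mem_filter, Finset.mem_powerset]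
    refine ⟨fun b hb => ?_, indep_mono S hJind (Finset.sdiff_subset)⟩
    simp only [Finset.mem_sdiff] at hb
    refine Finset.mem_sdiff.mpr ⟨Finset.mem_univ _, fun hmem => ?_⟩
    rcases Finset.mem_union.mp hmem with hbI | hbN
    · exact hb.2 hbI
    · obtain ⟨-, c, hcI, hdep⟩ := Finset.mem_filter.mp hbN
      exact hJind b hb.1 c (hIJ hcI) (fun h => hb.2 (h ▸ hcI)) hdep
  · intro K hK
    simp only [Finset.mem_filter, Finset.mem_powerset] at hK
    obtain ⟨hKsub, hKind⟩ := hK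
    have hKdep : ∀ b ∈ K, ∀ c ∈ I, ¬ Dep S b c := by
      intro b hb c hc hd
      have hbn := (Finset.mem_sdiff.mp (hKsub hb)).2
      exact hbn (Finset.mem_union_right _
        (Finset.mem_filter.mpr ⟨Finset.mem_univ _, ⟨c, hc, hd⟩⟩))
    simp only [Finset.mem_filter, Finset.mem_univ, true_and]
    refine ⟨Finset.subset_union_left, ?_⟩
    intro b hb b' hb' hne
    rcases Finset.mem_union.mp hb with hbI | hbK <;>
      rcases Finset.mem_union.mp hb' with hbI' | hbK'
    · exact hI b hbI b' hbI' hne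
    · exact fun hd => hKdep b' hbK' b hbI (dep_symm S hd)
    · exact hKdep b hbK b' hbI'
    · exact hKind b hbK b' hbK' hne
  · intro J hJ
    simp only [Finset.mem_filter, Finset.mem_univ, true_and] at hJ
    exact Finset.union_sdiff_of_subset hJ.1
  · intro K hK
    simp only [Finset.mem_filter, Finset.mem_powerset] at hK
    have hdisj : Disjoint I K := by
      rw [Finset.disjoint_right]
      intro b hbK hbI
      have := (Finset.mem_sdiff.mp (hK.1 hbK)).2
      exact this (Finset.mem_union_left _ hbI)
    exact Finset.union_sdiff_cancel_left hdisj
  · intro J hJ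
    simp only [Finset.mem_filter, Finset.mem_univ, true_and] at hJ
    rw [Finset.card_sdiff_of_subset hJ.1, ← Finset.prod_sdiff hJ.1]
    ring

end Alg

section Alg2
variable {n : ℕ} {E : Type} [Fintype E] (S : E → Finset (Fin n)) (P : E → ℝ)

/-- Candidate next level sets. -/
noncomputable def cand (I : Finset E) : Finset (Finset E) :=
  Finset.univ.filter (fun J => Indep S J ∧ ∀ b ∈ J, ∃ c ∈ I, Dep S b c)

theorem sum_powerset_neg_one (M : Finset E) :
    ∑ K ∈ M.powerset, (-1 : ℝ) ^ K.card = if M = ∅ then 1 else 0 := by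
  have h := Finset.sum_powerset_neg_one_pow_card (x := M)
  have := congrArg (Int.cast : ℤ → ℝ) h
  push_cast at this
  simpa using this

/-- B2 : `∑_{J ⊆ N(I) indep} Q(J) = Z(E \ N(I))`. -/
theorem sum_Q_eq (I : Finset E) :
    ∑ J ∈ cand S I, Q S P J = ZP S P (Finset.univ \ NDep S I) := by
  unfold Q cand
  rw [Finset.sum_comm' (t' := Finset.univ.filter (fun J => Indep S J))
    (s' := fun J' => (J' ∩ NDep S I).powerset)
    (by
      intro J J'
      simp only [Finset.mem_filter, Finset.mem_univ, true_and, Finset.mem_powerset,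
        Finset.subset_inter_iff]
      constructor
      · rintro ⟨⟨hJi, hJN⟩, hJJ', hJ'i⟩
        refine ⟨⟨hJJ', fun b hb => Finset.mem_filter.mpr ⟨Finset.mem_univ _, hJN b hb⟩⟩, hJ'i⟩
      · rintro ⟨⟨hJJ', hJN⟩, hJ'i⟩
        exact ⟨⟨indep_mono S hJ'i hJJ', fun b hb =>
          (Finset.mem_filter.mp (hJN hb)).2⟩, hJJ', hJ'i⟩)]
  have hstep : ∀ J' ∈ Finset.univ.filter (fun J => Indep S J),
      ∑ J ∈ (J' ∩ NDep S I).powerset, (-1 : ℝ) ^ (J'.card - J.card) * ∏ b ∈ J', P b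
      = (if J' ∩ NDep S I = ∅ then 1 else 0) * ((-1 : ℝ) ^ J'.card * ∏ b ∈ J', P b) := by
    intro J' _
    rw [← Finset.sum_mul]
    have h1 : ∀ J ∈ (J' ∩ NDep S I).powerset, ((-1 : ℝ)) ^ (J'.card - J.card)
        = (-1 : ℝ) ^ J.card * (-1 : ℝ) ^ J'.card := by
      intro J hJ
      have hle : J.card ≤ J'.card :=
        Finset.card_le_card ((Finset.mem_powerset.mp hJ).trans Finset.inter_subset_left)
      have h2 : ((-1 : ℝ)) ^ (J'.card - J.card) * (-1 : ℝ) ^ J.card = (-1 : ℝ) ^ J'.card := by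
        rw [← pow_add, Nat.sub_add_cancel hle]
      have h3 : ((-1 : ℝ)) ^ J.card * (-1 : ℝ) ^ J.card = 1 := by
        rw [← pow_add, ← two_mul, pow_mul]; norm_num
      calc ((-1 : ℝ)) ^ (J'.card - J.card)
          = ((-1 : ℝ)) ^ (J'.card - J.card) * ((-1 : ℝ) ^ J.card * (-1 : ℝ) ^ J.card) := by
            rw [h3, mul_one]
        _ = (-1 : ℝ) ^ J.card * (-1 : ℝ) ^ J'.card := by rw [← mul_assoc, h2, mul_comm]
    rw [Finset.sum_congr rfl h1, ← Finset.sum_mul, sum_powerset_neg_one, mul_assoc]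
  rw [Finset.sum_congr rfl hstep]
  unfold ZP
  simp only [ite_mul, one_mul, zero_mul]
  rw [← Finset.sum_filter]
  refine Finset.sum_congr ?_ (fun _ _ => rfl)
  ext K
  simp only [Finset.mem_filter, Finset.mem_univ, true_and, Finset.mem_powerset]
  constructor
  · rintro ⟨hKind, hKe⟩
    refine ⟨fun b hb => Finset.mem_sdiff.mpr ⟨Finset.mem_univ _, fun hbN => ?_⟩, hKind⟩
    exact Finset.notMem_empty b (hKe ▸ Finset.mem_inter.mpr ⟨hb, hbN⟩)
  · rintro ⟨hKsub, hKind⟩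
    refine ⟨hKind, Finset.eq_empty_iff_forall_notMem.mpr fun b hb => ?_⟩
    obtain ⟨hbK, hbN⟩ := Finset.mem_inter.mp hb
    exact (Finset.mem_sdiff.mp (hKsub hbK)).2 hbN

end Alg2

section Alg3
variable {n : ℕ} {E : Type} [Fintype E] (S : E → Finset (Fin n)) (P : E → ℝ)

theorem ZP_insert_isolated {b : E} (hb : ∀ c, ¬ Dep S b c) {T : Finset E} (hbT : b ∉ T) :
    ZP S P (insert b T) = (1 - P b) * ZP S P T := by
  unfold ZP
  rw [Finset.powerset_insert, Finset.filter_union]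
  rw [Finset.sum_union (by
    rw [Finset.disjoint_left]
    intro K hK1 hK2
    simp only [Finset.mem_filter, Finset.mem_powerset, Finset.mem_image] at hK1 hK2
    obtain ⟨⟨K', hK', rfl⟩, -⟩ := hK2
    exact hbT (hK1.1 (Finset.mem_insert_self b K')))]
  rw [Finset.filter_image, Finset.sum_image (by
    intro K hK K' hK' h
    simp only [Finset.coe_filter, Set.mem_setOf_eq, Finset.mem_coe, Finset.mem_filter, Finset.mem_powerset] at hK hK'
    have hbK : b ∉ K := fun hh => hbT (hK.1 hh)
    have hbK' : b ∉ K' := fun hh => hbT (hK'.1 hh)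
    rw [← Finset.erase_insert hbK, ← Finset.erase_insert hbK', h])]
  have hfe : Finset.filter (fun a => Indep S (insert b a)) T.powerset
      = Finset.filter (fun K => Indep S K) T.powerset := by
    refine Finset.filter_congr fun K hK => ?_
    simp only [Finset.mem_powerset] at hK
    constructor
    · exact fun h => indep_mono S h (Finset.subset_insert b K)
    · intro h x hx y hy hne
      rcases Finset.mem_insert.mp hx with rfl | hxK <;>
        rcases Finset.mem_insert.mp hy with rfl | hyK
      · exact absurd rfl hne
      · exact hb y
      · exact fun hd => hb x (dep_symm S hd)
      · exact h x hxK y hyK hne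
  rw [hfe]
  have hterm : ∀ K ∈ Finset.filter (fun K => Indep S K) T.powerset,
      (-1 : ℝ) ^ (insert b K).card * ∏ c ∈ insert b K, P c
      = -(P b) * ((-1 : ℝ) ^ K.card * ∏ c ∈ K, P c) := by
    intro K hK
    simp only [Finset.mem_filter, Finset.mem_powerset] at hK
    have hbK : b ∉ K := fun hh => hbT (hK.1 hh)
    rw [Finset.card_insert_of_notMem hbK, Finset.prod_insert hbK, pow_succ]
    ring
  rw [Finset.sum_congr rfl hterm, ← Finset.mul_sum]
  ring

theorem ZP_union_isolated {D T : Finset E} (hD : ∀ b ∈ D, ∀ c, ¬ Dep S b c)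
    (hDT : Disjoint D T) :
    ZP S P (T ∪ D) = (∏ b ∈ D, (1 - P b)) * ZP S P T := by
  induction D using Finset.induction_on with
  | empty => simp
  | @insert b D hbD ih =>
    have hdisj : Disjoint D T := (Finset.disjoint_insert_left.mp hDT).2
    have hbT : b ∉ T := (Finset.disjoint_insert_left.mp hDT).1
    have hbTD : b ∉ T ∪ D := by
      simp only [Finset.mem_union, not_or]; exact ⟨hbT, hbD⟩
    rw [Finset.union_insert, ZP_insert_isolated S P (hD b (Finset.mem_insert_self b D)) hbTD,
      ih (fun c hc => hD c (Finset.mem_insert_of_mem hc)) hdisj,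
      Finset.prod_insert hbD]
    ring

/-- The level-sum recursion. -/
noncomputable def sig : ℕ → Finset E → ℝ
  | 0, I => if I = ∅ then 1 else 0
  | (k+1), I => if I = ∅ then 1 else (∏ b ∈ I, P b) * ∑ J ∈ cand S I, sig k J

theorem sig_zero (I : Finset E) : sig S P 0 I = if I = ∅ then 1 else 0 := rfl

theorem sig_succ (k : ℕ) (I : Finset E) :
    sig S P (k+1) I = if I = ∅ then 1 else (∏ b ∈ I, P b) * ∑ J ∈ cand S I, sig S P k J := rfl

theorem sig_nonneg (hP0 : ∀ b, 0 ≤ P b) : ∀ (k : ℕ) (I : Finset E), 0 ≤ sig S P k I := by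
  intro k
  induction k with
  | zero => intro I; rw [sig_zero]; split <;> norm_num
  | succ k ih =>
    intro I
    rw [sig_succ]
    split
    · norm_num
    · exact mul_nonneg (Finset.prod_nonneg fun b _ => hP0 b)
        (Finset.sum_nonneg fun J _ => ih J)

theorem key_ineq (hP0 : ∀ b, 0 ≤ P b) (hP1 : ∀ b, P b ≤ 1) (hSh : Shearer S P)
    (I : Finset E) (hI : Indep S I) :
    (∏ b ∈ I, P b) * ∑ J ∈ cand S I, Q S P J ≤ Q S P I := by
  rw [sum_Q_eq]
  have hset : Finset.univ \ NDep S I = (Finset.univ \ NStar S I) ∪ (I \ NDep S I) := by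
    ext b
    simp only [Finset.mem_sdiff, Finset.mem_univ, true_and, Finset.mem_union, NStar,
      Finset.mem_union]
    by_cases hbI : b ∈ I <;> by_cases hbN : b ∈ NDep S I <;> tauto
  have hiso : ∀ b ∈ I \ NDep S I, ∀ c, ¬ Dep S b c := by
    intro b hb c hd
    obtain ⟨hbI, hbN⟩ := Finset.mem_sdiff.mp hb
    exact hbN (Finset.mem_filter.mpr ⟨Finset.mem_univ _, ⟨b, hbI, dep_self_of_dep S hd⟩⟩)
  have hdisj : Disjoint (I \ NDep S I) (Finset.univ \ NStar S I) := by
    rw [Finset.disjoint_left]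
    intro b hb1 hb2
    exact (Finset.mem_sdiff.mp hb2).2
      (Finset.mem_union_left _ (Finset.mem_sdiff.mp hb1).1)
  rw [hset, ZP_union_isolated S P hiso hdisj]
  rw [show (∏ b ∈ I, P b) * ((∏ b ∈ I \ NDep S I, (1 - P b)) * ZP S P (Finset.univ \ NStar S I))
      = (∏ b ∈ I \ NDep S I, (1 - P b)) * ((∏ b ∈ I, P b) * ZP S P (Finset.univ \ NStar S I))
    from by ring, ← Q_eq_ZP S P I hI]
  exact mul_le_of_le_one_left (hSh.2 I hI)
    (Finset.prod_le_one (fun b _ => by linarith [hP1 b]) (fun b _ => by linarith [hP0 b]))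

theorem sig_le_q (hP0 : ∀ b, 0 ≤ P b) (hP1 : ∀ b, P b ≤ 1) (hSh : Shearer S P) :
    ∀ (k : ℕ) (I : Finset E), Indep S I → sig S P k I ≤ Q S P I / Q S P ∅ := by
  have hQ0 := hSh.1
  intro k
  induction k with
  | zero =>
    intro I hI
    rw [sig_zero]
    split
    · rename_i h; rw [h, div_self (ne_of_gt hQ0)]
    · exact div_nonneg (hSh.2 I hI) (le_of_lt hQ0)
  | succ k ih =>
    intro I hI
    rw [sig_succ]
    split
    · rename_i h; rw [h, div_self (ne_of_gt hQ0)]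
    · calc (∏ b ∈ I, P b) * ∑ J ∈ cand S I, sig S P k J
          ≤ (∏ b ∈ I, P b) * ∑ J ∈ cand S I, Q S P J / Q S P ∅ := by
            refine mul_le_mul_of_nonneg_left ?_ (Finset.prod_nonneg fun b _ => hP0 b)
            refine Finset.sum_le_sum fun J hJ => ?_
            exact ih J (Finset.mem_filter.mp hJ).2.1
        _ = ((∏ b ∈ I, P b) * ∑ J ∈ cand S I, Q S P J) / Q S P ∅ := by
            rw [← Finset.sum_div]; ring
        _ ≤ Q S P I / Q S P ∅ := by
            have := key_ineq S P hP0 hP1 hSh I hI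
            gcongr

end Alg3

section SeqPart
variable {n : ℕ} {E : Type} [Fintype E] (S : E → Finset (Fin n)) (P : E → ℝ)

/-- Valid level sequences: head is `I`, consecutive levels are supported. -/
inductive VS (S : E → Finset (Fin n)) : Finset E → List (Finset E) → Prop
  | nil : VS S ∅ []
  | cons (I J : Finset E) (L : List (Finset E)) :
      I ≠ ∅ → Indep S I → Indep S J → (∀ b ∈ J, ∃ c ∈ I, Dep S b c) →
      VS S J L → VS S I (I :: L)

noncomputable def wL (P : E → ℝ) (L : List (Finset E)) : ℝ :=
  (L.map (fun J => ∏ b ∈ J, P b)).prod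

theorem wL_nil : wL P ([] : List (Finset E)) = 1 := rfl

theorem wL_cons (J : Finset E) (L : List (Finset E)) :
    wL P (J :: L) = (∏ b ∈ J, P b) * wL P L := by simp [wL]

theorem wL_nonneg (hP0 : ∀ b, 0 ≤ P b) : ∀ L : List (Finset E), 0 ≤ wL P L := by
  intro L
  induction L with
  | nil => rw [wL_nil]; norm_num
  | cons J L ih => rw [wL_cons]; exact mul_nonneg (Finset.prod_nonneg fun b _ => hP0 b) ih

theorem VS_head {J : Finset E} {M : List (Finset E)} (h : VS S J M) : J = M.headD ∅ := by
  cases h <;> simp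

theorem VS_empty {L : List (Finset E)} (h : VS S ∅ L) : L = [] := by
  cases h with
  | nil => rfl
  | cons _ _ _ hne => exact absurd rfl hne

theorem sum_wL_le (hP0 : ∀ b, 0 ≤ P b) :
    ∀ (k : ℕ) (I : Finset E), ∀ 𝔉 : Finset (List (Finset E)),
      (∀ L ∈ 𝔉, VS S I L ∧ L.length ≤ k) → ∑ L ∈ 𝔉, wL P L ≤ sig S P k I := by
  intro k
  induction k with
  | zero =>
    intro I 𝔉 h𝔉
    by_cases hIe : I = ∅
    · subst hIe
      have hsub : 𝔉 ⊆ {[]} := by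
        intro L hL
        simp only [Finset.mem_singleton]
        exact VS_empty S (h𝔉 L hL).1
      calc ∑ L ∈ 𝔉, wL P L ≤ ∑ L ∈ ({[]} : Finset (List (Finset E))), wL P L := by
            refine Finset.sum_le_sum_of_subset_of_nonneg hsub fun L _ _ => wL_nonneg P hP0 L
        _ = 1 := by simp [wL_nil]
        _ = sig S P 0 ∅ := by rw [sig_zero]; simp
    · have : 𝔉 = ∅ := by
        refine Finset.eq_empty_iff_forall_notMem.mpr fun L hL => ?_
        obtain ⟨hVS, hlen⟩ := h𝔉 L hL
        cases hVS with
        | nil => exact hIe rfl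
        | cons _ _ _ _ _ _ _ _ => simp at hlen
      rw [this, sig_zero, if_neg hIe]
      simp
  | succ k ih =>
    intro I 𝔉 h𝔉
    by_cases hIe : I = ∅
    · subst hIe
      have hsub : 𝔉 ⊆ {[]} := by
        intro L hL
        simp only [Finset.mem_singleton]
        exact VS_empty S (h𝔉 L hL).1
      calc ∑ L ∈ 𝔉, wL P L ≤ ∑ L ∈ ({[]} : Finset (List (Finset E))), wL P L := by
            refine Finset.sum_le_sum_of_subset_of_nonneg hsub fun L _ _ => wL_nonneg P hP0 L
        _ = 1 := by simp [wL_nil]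
        _ = sig S P (k+1) ∅ := by rw [sig_succ]; simp
    · have hcons : ∀ L ∈ 𝔉, ∃ M, L = I :: M := by
        intro L hL
        cases (h𝔉 L hL).1 with
        | nil => exact absurd rfl hIe
        | cons _ _ M _ _ _ _ _ => exact ⟨M, rfl⟩
      have step1 : ∑ L ∈ 𝔉, wL P L = (∏ b ∈ I, P b) * ∑ L ∈ 𝔉, wL P L.tail := by
        rw [Finset.mul_sum]
        refine Finset.sum_congr rfl fun L hL => ?_
        obtain ⟨M, rfl⟩ := hcons L hL
        rw [wL_cons]; rfl
      have hinj : ∀ L₁ ∈ 𝔉, ∀ L₂ ∈ 𝔉, L₁.tail = L₂.tail → L₁ = L₂ := by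
        intro L₁ h₁ L₂ h₂ h
        obtain ⟨M₁, rfl⟩ := hcons L₁ h₁
        obtain ⟨M₂, rfl⟩ := hcons L₂ h₂
        simpa using h
      have step2 : ∑ L ∈ 𝔉, wL P L.tail = ∑ M ∈ 𝔉.image List.tail, wL P M :=
        (Finset.sum_image hinj).symm
      have hVSM : ∀ M ∈ 𝔉.image List.tail, VS S (M.headD ∅) M ∧ M.length ≤ k
          ∧ M.headD ∅ ∈ cand S I := by
        intro M hM
        obtain ⟨L, hL, rfl⟩ := Finset.mem_image.mp hM
        obtain ⟨hVS, hlen⟩ := h𝔉 L hL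
        cases hVS with
        | nil => exact absurd rfl hIe
        | cons _ J M hne hI hJ hdep hVSJ =>
          have hhd : J = M.headD ∅ := VS_head S hVSJ
          simp only [List.tail_cons, List.length_cons] at hlen ⊢
          refine ⟨hhd ▸ hVSJ, by omega, ?_⟩
          rw [← hhd]
          exact Finset.mem_filter.mpr ⟨Finset.mem_univ _, hJ, hdep⟩
      have step3 : ∑ M ∈ 𝔉.image List.tail, wL P M
          = ∑ J ∈ cand S I, ∑ M ∈ (𝔉.image List.tail).filter (fun M => M.headD ∅ = J), wL P M :=
        (Finset.sum_fiberwise_of_maps_to (fun M hM => (hVSM M hM).2.2) _).symm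
      have step4 : ∀ J ∈ cand S I,
          ∑ M ∈ (𝔉.image List.tail).filter (fun M => M.headD ∅ = J), wL P M ≤ sig S P k J := by
        intro J hJ
        refine ih J _ fun M hM => ?_
        obtain ⟨hM1, hM2⟩ := Finset.mem_filter.mp hM
        obtain ⟨hVS, hlen, -⟩ := hVSM M hM1
        exact ⟨hM2 ▸ hVS, hlen⟩
      have hfin : ∑ L ∈ 𝔉, wL P L ≤ (∏ b ∈ I, P b) * ∑ J ∈ cand S I, sig S P k J := by
        rw [step1, step2, step3]
        exact mul_le_mul_of_nonneg_left (Finset.sum_le_sum step4)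
          (Finset.prod_nonneg fun b _ => hP0 b)
      calc ∑ L ∈ 𝔉, wL P L ≤ (∏ b ∈ I, P b) * ∑ J ∈ cand S I, sig S P k J := hfin
        _ = sig S P (k+1) I := by rw [sig_succ, if_neg hIe]

/-- Building a VS from a function on an initial segment. -/
theorem VS_of_fn : ∀ (m : ℕ) (g : ℕ → Finset E),
    (∀ t, t ≤ m → g t ≠ ∅) → (∀ t, t ≤ m → Indep S (g t)) →
    (∀ t, t + 1 ≤ m → ∀ b ∈ g (t+1), ∃ c ∈ g t, Dep S b c) →
    VS S (g 0) ((List.range (m+1)).map g) := by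
  intro m
  induction m with
  | zero =>
    intro g h1 h2 _
    have : (List.range 1).map g = [g 0] := by rw [List.range_succ_eq_map]; rfl
    rw [this]
    exact VS.cons (g 0) ∅ [] (h1 0 le_rfl) (h2 0 le_rfl) (indep_empty S)
      (fun b hb => absurd hb (Finset.notMem_empty b)) VS.nil
  | succ m ihm =>
    intro g h1 h2 h3
    rw [List.range_succ_eq_map, List.map_cons, List.map_map]
    refine VS.cons (g 0) (g 1) _ (h1 0 (by omega)) (h2 0 (by omega)) (h2 1 (by omega))
      (h3 0 (by omega)) ?_
    have := ihm (g ∘ Nat.succ) (fun t ht => h1 (t+1) (by omega)) (fun t ht => h2 (t+1) (by omega))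
      (fun t ht b hb => h3 (t+1) (by omega) b hb)
    simpa using this

end SeqPart


section Graph
variable {n : ℕ} {E : Type} [Fintype E] {S : E → Finset (Fin n)}

namespace WDag

variable {s : ℕ} {B : Fin s → E}

theorem wf_rev (G : WDag n E S) : WellFounded (fun w v : Fin G.size => G.edge v w) := by
  haveI hi : IsIrrefl (Fin G.size) (Relation.TransGen (fun w v => G.edge v w)) :=
    ⟨fun v hv => G.acyclic v (Relation.transGen_swap.mp hv)⟩
  haveI ht : IsTrans (Fin G.size) (Relation.TransGen (fun w v => G.edge v w)) :=
    ⟨fun _ _ _ h1 h2 => Relation.TransGen.trans h1 h2⟩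
  exact Subrelation.wf (r := Relation.TransGen (fun w v : Fin G.size => G.edge v w))
    (fun h => Relation.TransGen.single h)
    (Finite.wellFounded_of_trans_of_irrefl
      (Relation.TransGen (fun w v : Fin G.size => G.edge v w)))

/-- The chosen enumeration of the sinks. -/
noncomputable def sf (G : WDag n E S) (hGB : G.SinksAre B) : Fin s → Fin G.size :=
  hGB.choose

theorem sf_sink (G : WDag n E S) (hGB : G.SinksAre B) (j : Fin s) :
    IsSink G (sf G hGB j) := (hGB.choose_spec.1 j).1

theorem sf_label (G : WDag n E S) (hGB : G.SinksAre B) (j : Fin s) :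
    G.label (sf G hGB j) = B j := (hGB.choose_spec.1 j).2

theorem sf_cover (G : WDag n E S) (hGB : G.SinksAre B) (v : Fin G.size) (hv : IsSink G v) :
    ∃ j, sf G hGB j = v := hGB.choose_spec.2 v hv

theorem sf_inj (G : WDag n E S) (hGB : G.SinksAre B) (hBinj : Function.Injective B)
    {i j : Fin s} (h : sf G hGB i = sf G hGB j) : i = j := by
  apply hBinj
  rw [← sf_label G hGB i, ← sf_label G hGB j, h]

theorem exists_reach_sink (G : WDag n E S) (hGB : G.SinksAre B) (v : Fin G.size) :
    ∃ i, Relation.ReflTransGen G.edge v (sf G hGB i) := by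
  induction v using (wf_rev G).induction with
  | _ v ih =>
    by_cases hs : IsSink G v
    · obtain ⟨j, hj⟩ := sf_cover G hGB v hs
      exact ⟨j, by rw [hj]⟩
    · simp only [IsSink, not_forall, not_not] at hs
      obtain ⟨w, hw⟩ := hs
      obtain ⟨i, hi⟩ := ih w hw
      exact ⟨i, Relation.ReflTransGen.head hw hi⟩

noncomputable def idxS (G : WDag n E S) (hGB : G.SinksAre B) (v : Fin G.size) :
    Finset (Fin s) :=
  Finset.univ.filter (fun i => Relation.ReflTransGen G.edge v (sf G hGB i))

theorem idxS_nonempty (G : WDag n E S) (hGB : G.SinksAre B) (v : Fin G.size) :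
    (idxS G hGB v).Nonempty := by
  obtain ⟨i, hi⟩ := exists_reach_sink G hGB v
  exact ⟨i, Finset.mem_filter.mpr ⟨Finset.mem_univ _, hi⟩⟩

/-- The least-index sink reachable from `v`. -/
noncomputable def idx (G : WDag n E S) (hGB : G.SinksAre B) (v : Fin G.size) : Fin s :=
  (idxS G hGB v).min' (idxS_nonempty G hGB v)

theorem idx_le_of_edge (G : WDag n E S) (hGB : G.SinksAre B) {v w : Fin G.size}
    (h : G.edge v w) : idx G hGB v ≤ idx G hGB w := by
  have hsub : idxS G hGB w ⊆ idxS G hGB v := by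
    intro i hi
    exact Finset.mem_filter.mpr ⟨Finset.mem_univ _,
      Relation.ReflTransGen.head h (Finset.mem_filter.mp hi).2⟩
  exact Finset.min'_le _ _ (hsub (Finset.min'_mem _ _))

theorem reach_idx (G : WDag n E S) (hGB : G.SinksAre B) (v : Fin G.size) :
    Relation.ReflTransGen G.edge v (sf G hGB (idx G hGB v)) :=
  (Finset.mem_filter.mp (Finset.min'_mem _ (idxS_nonempty G hGB v))).2

theorem sink_rtg_eq (G : WDag n E S) {v u : Fin G.size} (hs : IsSink G v)
    (h : Relation.ReflTransGen G.edge v u) : u = v := by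
  rcases Relation.ReflTransGen.cases_head h with heq | ⟨c, hc, -⟩
  · exact heq.symm
  · exact absurd hc (hs c)

theorem idx_sf (G : WDag n E S) (hGB : G.SinksAre B) (hBinj : Function.Injective B)
    (i : Fin s) : idx G hGB (sf G hGB i) = i :=
  sf_inj G hGB hBinj (sink_rtg_eq G (sf_sink G hGB i) (reach_idx G hGB (sf G hGB i)))

theorem exists_edge_idx (G : WDag n E S) (hGB : G.SinksAre B) {v : Fin G.size}
    (hns : ¬ IsSink G v) : ∃ w, G.edge v w ∧ idx G hGB w = idx G hGB v := by
  have hr := reach_idx G hGB v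
  rcases Relation.ReflTransGen.cases_head hr with heq | ⟨u, hvu, hu⟩
  · exact absurd (by rw [heq]; exact sf_sink G hGB _) hns
  · refine ⟨u, hvu, le_antisymm ?_ ?_⟩
    · have hmem : idx G hGB v ∈ idxS G hGB u :=
        Finset.mem_filter.mpr ⟨Finset.mem_univ _, hu⟩
      exact Finset.min'_le _ _ hmem
    · exact idx_le_of_edge G hGB hvu

/-- The level of a node within its part. -/
noncomputable def lvl (G : WDag n E S) (hGB : G.SinksAre B) : Fin G.size → ℕ :=
  (wf_rev G).fix (fun v ih =>
    (Finset.univ.filter (fun w => G.edge v w ∧ idx G hGB w = idx G hGB v)).attach.sup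
      (fun w => ih w.1 (Finset.mem_filter.mp w.2).2.1 + 1))

theorem lvl_eq (G : WDag n E S) (hGB : G.SinksAre B) (v : Fin G.size) :
    lvl G hGB v =
    (Finset.univ.filter (fun w => G.edge v w ∧ idx G hGB w = idx G hGB v)).attach.sup
      (fun w => lvl G hGB w.1 + 1) := by
  unfold lvl
  exact WellFounded.fix_eq _ _ v

theorem lvl_lt (G : WDag n E S) (hGB : G.SinksAre B) {v w : Fin G.size}
    (h : G.edge v w) (hidx : idx G hGB w = idx G hGB v) : lvl G hGB w < lvl G hGB v := by
  have hmem : w ∈ Finset.univ.filter (fun w => G.edge v w ∧ idx G hGB w = idx G hGB v) :=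
    Finset.mem_filter.mpr ⟨Finset.mem_univ _, h, hidx⟩
  have hle := Finset.le_sup (f := fun w : {x // x ∈ Finset.univ.filter
      (fun w => G.edge v w ∧ idx G hGB w = idx G hGB v)} => lvl G hGB w.1 + 1)
    (Finset.mem_attach _ ⟨w, hmem⟩)
  rw [← lvl_eq] at hle
  change lvl G hGB w + 1 ≤ lvl G hGB v at hle
  omega

theorem lvl_succ (G : WDag n E S) (hGB : G.SinksAre B) {v : Fin G.size} {m : ℕ}
    (h : lvl G hGB v = m + 1) :
    ∃ w, G.edge v w ∧ idx G hGB w = idx G hGB v ∧ lvl G hGB w = m := by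
  rw [lvl_eq] at h
  set F := Finset.univ.filter (fun w => G.edge v w ∧ idx G hGB w = idx G hGB v) with hF
  have hne : F.attach.Nonempty := by
    rcases F.attach.eq_empty_or_nonempty with he | hne
    · rw [he, Finset.sup_empty] at h
      exact absurd h (by simp)
    · exact hne
  obtain ⟨w, -, hw⟩ := Finset.exists_mem_eq_sup F.attach hne (fun w => lvl G hGB w.1 + 1)
  have hmem := Finset.mem_filter.mp w.2
  exact ⟨w.1, hmem.2.1, hmem.2.2, by omega⟩

theorem sink_lvl0 (G : WDag n E S) (hGB : G.SinksAre B) {v : Fin G.size}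
    (hs : IsSink G v) : lvl G hGB v = 0 := by
  rw [lvl_eq]
  have : Finset.univ.filter (fun w => G.edge v w ∧ idx G hGB w = idx G hGB v) = ∅ :=
    Finset.filter_eq_empty_iff.mpr (fun w _ hc => hs w hc.1)
  rw [this]
  simp

theorem lvl0_sink (G : WDag n E S) (hGB : G.SinksAre B) {v : Fin G.size}
    (h : lvl G hGB v = 0) : IsSink G v := by
  by_contra hns
  obtain ⟨w, hw, hidx⟩ := exists_edge_idx G hGB hns
  have := lvl_lt G hGB hw hidx
  omega

theorem node_inj (G : WDag n E S) (hGB : G.SinksAre B) (hBinj : Function.Injective B)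
    {v w : Fin G.size} (hidx : idx G hGB v = idx G hGB w) (hlvl : lvl G hGB v = lvl G hGB w)
    (hlab : G.label v = G.label w) : v = w := by
  by_contra hne
  by_cases hd : Dep S (G.label v) (G.label w)
  · rcases G.dep_edge v w hne hd with h | h
    · have := lvl_lt G hGB h hidx.symm
      omega
    · have := lvl_lt G hGB h hidx
      omega
  · have hdd : ¬ Dep S (G.label v) (G.label v) := by rwa [← hlab] at hd; 
    have hsv : IsSink G v := fun u hu => hdd (dep_self_of_dep S (G.edge_dep v u hu))
    have hsw : IsSink G w := fun u hu => hdd (by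
      rw [hlab]
      exact dep_self_of_dep S (G.edge_dep w u hu))
    obtain ⟨j, hj⟩ := sf_cover G hGB v hsv
    obtain ⟨j', hj'⟩ := sf_cover G hGB w hsw
    have : B j = B j' := by
      rw [← sf_label G hGB j, ← sf_label G hGB j', hj, hj', hlab]
    have := hBinj this
    rw [← hj, ← hj', this] at hne
    exact hne rfl

theorem edge_iff (G : WDag n E S) (hGB : G.SinksAre B) (v w : Fin G.size) :
    G.edge v w ↔ Dep S (G.label v) (G.label w) ∧
      (idx G hGB v < idx G hGB w ∨
        (idx G hGB v = idx G hGB w ∧ lvl G hGB w < lvl G hGB v)) := by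
  constructor
  · intro h
    refine ⟨G.edge_dep v w h, ?_⟩
    rcases lt_or_eq_of_le (idx_le_of_edge G hGB h) with hlt | heq
    · exact Or.inl hlt
    · exact Or.inr ⟨heq, lvl_lt G hGB h heq.symm⟩
  · rintro ⟨hd, hord⟩
    have hne : v ≠ w := by
      rintro rfl
      rcases hord with h | ⟨-, h⟩
      · exact absurd h (lt_irrefl _)
      · exact absurd h (lt_irrefl _)
    rcases G.dep_edge v w hne hd with h | h
    · exact h
    · exfalso
      have h1 := idx_le_of_edge G hGB h
      rcases hord with h2 | ⟨h2, h3⟩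
      · exact absurd (lt_of_lt_of_le h2 h1) (lt_irrefl _)
      · have := lvl_lt G hGB h h2
        omega

end WDag

end Graph

section Cells
variable {n : ℕ} {E : Type} [Fintype E] {S : E → Finset (Fin n)} {s : ℕ} {B : Fin s → E}

namespace WDag

/-- The labels appearing at part `i`, level `j`. -/
noncomputable def cellL (G : WDag n E S) (hGB : G.SinksAre B) (i : Fin s) (j : ℕ) : Finset E :=
  (Finset.univ.filter (fun v => idx G hGB v = i ∧ lvl G hGB v = j)).image G.label

/-- The top level of part `i`. -/
noncomputable def Kl (G : WDag n E S) (hGB : G.SinksAre B) (i : Fin s) : ℕ :=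
  (Finset.univ.filter (fun v => idx G hGB v = i)).sup (lvl G hGB)

/-- The level sequence of part `i`. -/
noncomputable def seqT (G : WDag n E S) (hGB : G.SinksAre B) (i : Fin s) :
    List (Finset E) :=
  (List.range (Kl G hGB i + 1)).map (cellL G hGB i)

theorem mem_cellL (G : WDag n E S) (hGB : G.SinksAre B) {i : Fin s} {j : ℕ} {b : E} :
    b ∈ cellL G hGB i j ↔ ∃ v, idx G hGB v = i ∧ lvl G hGB v = j ∧ G.label v = b := by
  unfold cellL
  simp only [Finset.mem_image, Finset.mem_filter, Finset.mem_univ, true_and]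
  constructor
  · rintro ⟨v, ⟨h1, h2⟩, h3⟩; exact ⟨v, h1, h2, h3⟩
  · rintro ⟨v, h1, h2, h3⟩; exact ⟨v, ⟨h1, h2⟩, h3⟩

theorem cellL_zero (G : WDag n E S) (hGB : G.SinksAre B) (hBinj : Function.Injective B)
    (i : Fin s) : cellL G hGB i 0 = {B i} := by
  ext b
  rw [mem_cellL, Finset.mem_singleton]
  constructor
  · rintro ⟨v, h1, h2, h3⟩
    obtain ⟨j, hj⟩ := sf_cover G hGB v (lvl0_sink G hGB h2)
    have : j = i := by rw [← h1, ← hj, idx_sf G hGB hBinj]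
    rw [← h3, ← hj, sf_label G hGB, this]
  · rintro rfl
    exact ⟨sf G hGB i, idx_sf G hGB hBinj i,
      sink_lvl0 G hGB (sf_sink G hGB i), sf_label G hGB i⟩

theorem lvl_le_Kl (G : WDag n E S) (hGB : G.SinksAre B) (v : Fin G.size) :
    lvl G hGB v ≤ Kl G hGB (idx G hGB v) :=
  Finset.le_sup (Finset.mem_filter.mpr ⟨Finset.mem_univ _, rfl⟩)

theorem cellL_empty (G : WDag n E S) (hGB : G.SinksAre B) {i : Fin s} {j : ℕ}
    (hj : Kl G hGB i < j) : cellL G hGB i j = ∅ := by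
  rw [Finset.eq_empty_iff_forall_notMem]
  intro b hb
  obtain ⟨v, h1, h2, -⟩ := (mem_cellL G hGB).mp hb
  have := lvl_le_Kl G hGB v
  rw [h1, h2] at this
  omega

theorem exists_lvl (G : WDag n E S) (hGB : G.SinksAre B) (hBinj : Function.Injective B)
    (i : Fin s) : ∀ j ≤ Kl G hGB i, ∃ v, idx G hGB v = i ∧ lvl G hGB v = j := by
  have htop : ∃ v, idx G hGB v = i ∧ lvl G hGB v = Kl G hGB i := by
    have hne : (Finset.univ.filter (fun v => idx G hGB v = i)).Nonempty :=
      ⟨sf G hGB i, Finset.mem_filter.mpr ⟨Finset.mem_univ _, idx_sf G hGB hBinj i⟩⟩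
    obtain ⟨v, hv, hveq⟩ := Finset.exists_mem_eq_sup _ hne (lvl G hGB)
    exact ⟨v, (Finset.mem_filter.mp hv).2, hveq.symm⟩
  have aux : ∀ m j, j + m = Kl G hGB i → ∃ v, idx G hGB v = i ∧ lvl G hGB v = j := by
    intro m
    induction m with
    | zero => intro j hj; rw [Nat.add_zero] at hj; exact hj ▸ htop
    | succ m ih =>
      intro j hj
      obtain ⟨v, h1, h2⟩ := ih (j+1) (by omega)
      obtain ⟨w, -, hidx, hlvl⟩ := lvl_succ G hGB h2
      exact ⟨w, by rw [hidx, h1], hlvl⟩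
  intro j hj
  exact aux (Kl G hGB i - j) j (by omega)

theorem cellL_nonempty (G : WDag n E S) (hGB : G.SinksAre B) (hBinj : Function.Injective B)
    {i : Fin s} {j : ℕ} (hj : j ≤ Kl G hGB i) : cellL G hGB i j ≠ ∅ := by
  obtain ⟨v, h1, h2⟩ := exists_lvl G hGB hBinj i j hj
  intro he
  have : G.label v ∈ cellL G hGB i j := (mem_cellL G hGB).mpr ⟨v, h1, h2, rfl⟩
  rw [he] at this
  exact Finset.notMem_empty _ this

theorem indep_cellL (G : WDag n E S) (hGB : G.SinksAre B) (i : Fin s) (j : ℕ) :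
    Indep S (cellL G hGB i j) := by
  intro b hb b' hb' hne hd
  obtain ⟨v, hv1, hv2, hv3⟩ := (mem_cellL G hGB).mp hb
  obtain ⟨w, hw1, hw2, hw3⟩ := (mem_cellL G hGB).mp hb'
  have hvw : v ≠ w := fun h => hne (by rw [← hv3, ← hw3, h])
  rw [← hv3, ← hw3] at hd
  rcases G.dep_edge v w hvw hd with h | h
  · have := lvl_lt G hGB h (by rw [hv1, hw1])
    omega
  · have := lvl_lt G hGB h (by rw [hv1, hw1])
    omega

theorem chain_cellL (G : WDag n E S) (hGB : G.SinksAre B) (i : Fin s) (j : ℕ) :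
    ∀ b ∈ cellL G hGB i (j+1), ∃ c ∈ cellL G hGB i j, Dep S b c := by
  intro b hb
  obtain ⟨v, hv1, hv2, hv3⟩ := (mem_cellL G hGB).mp hb
  obtain ⟨w, hew, hidx, hlvl⟩ := lvl_succ G hGB hv2
  refine ⟨G.label w, (mem_cellL G hGB).mpr ⟨w, by rw [hidx, hv1], hlvl, rfl⟩, ?_⟩
  rw [← hv3]
  exact G.edge_dep v w hew

theorem VS_seqT (G : WDag n E S) (hGB : G.SinksAre B) (hBinj : Function.Injective B)
    (i : Fin s) : VS S ({B i} : Finset E) (seqT G hGB i) := by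
  have h := VS_of_fn S (Kl G hGB i) (cellL G hGB i)
    (fun t ht => cellL_nonempty G hGB hBinj ht)
    (fun t _ => indep_cellL G hGB i t)
    (fun t _ b hb => chain_cellL G hGB i t b hb)
  rwa [cellL_zero G hGB hBinj i] at h

theorem Kl_lt_size (G : WDag n E S) (hGB : G.SinksAre B) (hBinj : Function.Injective B)
    (i : Fin s) : Kl G hGB i + 1 ≤ G.size := by
  have hpick : ∀ j ∈ Finset.range (Kl G hGB i + 1), ∃ v, idx G hGB v = i ∧ lvl G hGB v = j := by
    intro j hj
    exact exists_lvl G hGB hBinj i j (by simpa [Nat.lt_succ_iff] using Finset.mem_range.mp hj)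
  classical
  have hcard := Finset.card_le_card_of_injOn (s := Finset.range (Kl G hGB i + 1))
    (t := (Finset.univ : Finset (Fin G.size)))
    (fun j => if h : ∃ v, idx G hGB v = i ∧ lvl G hGB v = j then h.choose else sf G hGB i)
    (fun j _ => Finset.mem_univ _)
    (by
      intro j hj j' hj' heq
      have hjm : j ∈ Finset.range (Kl G hGB i + 1) := by simpa using hj
      have hjm' : j' ∈ Finset.range (Kl G hGB i + 1) := by simpa using hj'
      have h1 := hpick j hjm
      have h2 := hpick j' hjm' 
      simp only [] at heq
      rw [dif_pos h1, dif_pos h2] at heq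
      have e1 := h1.choose_spec.2
      have e2 := h2.choose_spec.2
      rw [heq] at e1
      rw [← e1, e2])
  simpa using hcard

theorem list_prod_range (g : ℕ → ℝ) : ∀ m : ℕ, ((List.range m).map g).prod
    = ∏ j ∈ Finset.range m, g j := by
  intro m
  induction m with
  | zero => simp
  | succ m ih => rw [List.range_succ, List.map_append, List.prod_append,
      Finset.prod_range_succ, ih]; simp

theorem wt_eq_prod (G : WDag n E S) (hGB : G.SinksAre B) (hBinj : Function.Injective B)
    (P : E → ℝ) : wt P G = ∏ i : Fin s, wL P (seqT G hGB i) := by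
  have hmap : ∀ v ∈ (Finset.univ : Finset (Fin G.size)),
      (idx G hGB v, lvl G hGB v) ∈ (Finset.univ : Finset (Fin s)) ×ˢ Finset.range G.size := by
    intro v _
    refine Finset.mem_product.mpr ⟨Finset.mem_univ _, Finset.mem_range.mpr ?_⟩
    have h1 := lvl_le_Kl G hGB v
    have h2 := Kl_lt_size G hGB hBinj (idx G hGB v)
    omega
  have hfib := Finset.prod_fiberwise_of_maps_to hmap (fun v => P (G.label v))
  have hfibcell : ∀ i : Fin s, ∀ j : ℕ,
      ∏ v ∈ Finset.univ.filter (fun v => (idx G hGB v, lvl G hGB v) = (i, j)), P (G.label v)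
      = ∏ b ∈ cellL G hGB i j, P b := by
    intro i j
    rw [cellL, Finset.prod_image]
    · refine Finset.prod_congr ?_ (fun _ _ => rfl)
      refine Finset.filter_congr fun v _ => ?_
      simp [Prod.ext_iff]
    · intro v hv w hw hlab
      obtain ⟨-, hv1, hv2⟩ := Finset.mem_filter.mp hv
      obtain ⟨-, hw1, hw2⟩ := Finset.mem_filter.mp hw
      exact node_inj G hGB hBinj (by rw [hv1, hw1]) (by rw [hv2, hw2]) hlab
  calc wt P G = ∏ v, P (G.label v) := rfl
    _ = ∏ ij ∈ (Finset.univ : Finset (Fin s)) ×ˢ Finset.range G.size,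
          ∏ v ∈ Finset.univ.filter (fun v => (idx G hGB v, lvl G hGB v) = ij),
            P (G.label v) := hfib.symm
    _ = ∏ i : Fin s, ∏ j ∈ Finset.range G.size,
          ∏ v ∈ Finset.univ.filter (fun v => (idx G hGB v, lvl G hGB v) = (i, j)),
            P (G.label v) := by rw [Finset.prod_product]
    _ = ∏ i : Fin s, ∏ j ∈ Finset.range G.size, ∏ b ∈ cellL G hGB i j, P b := by
        refine Finset.prod_congr rfl fun i _ => Finset.prod_congr rfl fun j _ => ?_
        exact hfibcell i j
    _ = ∏ i : Fin s, ∏ j ∈ Finset.range (Kl G hGB i + 1), ∏ b ∈ cellL G hGB i j, P b := by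
        refine Finset.prod_congr rfl fun i _ => ?_
        refine (Finset.prod_subset (Finset.range_subset_range.mpr (Kl_lt_size G hGB hBinj i))
          fun j _ hj => ?_).symm
        rw [cellL_empty G hGB (by
          simp only [Finset.mem_range, Nat.lt_succ_iff, not_le] at hj
          exact hj)]
        exact Finset.prod_empty
    _ = ∏ i : Fin s, wL P (seqT G hGB i) := by
        refine Finset.prod_congr rfl fun i _ => ?_
        rw [wL, seqT, List.map_map]
        exact (list_prod_range _ _).symm

end WDag

end Cells

section Recon
variable {n : ℕ} {E : Type} [Fintype E] {S : E → Finset (Fin n)} {s : ℕ} {B : Fin s → E}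

namespace WDag

theorem iso_of_seqT_eq (G G' : WDag n E S) (hGB : G.SinksAre B) (hGB' : G'.SinksAre B)
    (hBinj : Function.Injective B) (h : ∀ i, seqT G hGB i = seqT G' hGB' i) :
    Iso G G' := by
  have hK : ∀ i, Kl G hGB i = Kl G' hGB' i := by
    intro i
    have := congrArg List.length (h i)
    simpa [seqT] using this
  have hcell : ∀ i j, cellL G hGB i j = cellL G' hGB' i j := by
    intro i j
    by_cases hj : j ≤ Kl G hGB i
    · have hlen : j < Kl G hGB i + 1 := by omega
      have h1 : (seqT G hGB i)[j]? = some (cellL G hGB i j) := by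
        rw [seqT, List.getElem?_map, List.getElem?_range hlen]
        rfl
      have h2 : (seqT G' hGB' i)[j]? = some (cellL G' hGB' i j) := by
        rw [seqT, List.getElem?_map, List.getElem?_range (by rw [← hK i]; omega)]
        rfl
      rw [h i, h2] at h1
      exact (Option.some.inj h1).symm
    · rw [cellL_empty G hGB (by omega), cellL_empty G' hGB' (by rw [← hK i]; omega)]
  have hex : ∀ v : Fin G.size, ∃ v', idx G' hGB' v' = idx G hGB v ∧
      lvl G' hGB' v' = lvl G hGB v ∧ G'.label v' = G.label v := by
    intro v
    have hb : G.label v ∈ cellL G hGB (idx G hGB v) (lvl G hGB v) :=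
      (mem_cellL G hGB).mpr ⟨v, rfl, rfl, rfl⟩
    rw [hcell] at hb
    obtain ⟨v', h1, h2, h3⟩ := (mem_cellL G' hGB').mp hb
    exact ⟨v', h1, h2, h3⟩
  have hex' : ∀ v' : Fin G'.size, ∃ v, idx G hGB v = idx G' hGB' v' ∧
      lvl G hGB v = lvl G' hGB' v' ∧ G.label v = G'.label v' := by
    intro v'
    have hb : G'.label v' ∈ cellL G' hGB' (idx G' hGB' v') (lvl G' hGB' v') :=
      (mem_cellL G' hGB').mpr ⟨v', rfl, rfl, rfl⟩
    rw [← hcell] at hb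
    obtain ⟨v, h1, h2, h3⟩ := (mem_cellL G hGB).mp hb
    exact ⟨v, h1, h2, h3⟩
  let F : Fin G.size → Fin G'.size := fun v => (hex v).choose
  let F' : Fin G'.size → Fin G.size := fun v' => (hex' v').choose
  have hFs : ∀ v, idx G' hGB' (F v) = idx G hGB v ∧
      lvl G' hGB' (F v) = lvl G hGB v ∧ G'.label (F v) = G.label v :=
    fun v => (hex v).choose_spec
  have hFs' : ∀ v', idx G hGB (F' v') = idx G' hGB' v' ∧
      lvl G hGB (F' v') = lvl G' hGB' v' ∧ G.label (F' v') = G'.label v' :=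
    fun v' => (hex' v').choose_spec
  have hleft : ∀ v, F' (F v) = v := by
    intro v
    refine node_inj G hGB hBinj ?_ ?_ ?_
    · rw [(hFs' (F v)).1, (hFs v).1]
    · rw [(hFs' (F v)).2.1, (hFs v).2.1]
    · rw [(hFs' (F v)).2.2, (hFs v).2.2]
  have hright : ∀ v', F (F' v') = v' := by
    intro v'
    refine node_inj G' hGB' hBinj ?_ ?_ ?_
    · rw [(hFs (F' v')).1, (hFs' v').1]
    · rw [(hFs (F' v')).2.1, (hFs' v').2.1]
    · rw [(hFs (F' v')).2.2, (hFs' v').2.2]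
  refine ⟨⟨F, F', hleft, hright⟩, fun v => (hFs v).2.2, fun v w => ?_⟩
  show G'.edge (F v) (F w) ↔ G.edge v w
  rw [edge_iff G' hGB' (F v) (F w), edge_iff G hGB v w,
    (hFs v).1, (hFs w).1, (hFs v).2.1, (hFs w).2.1, (hFs v).2.2, (hFs w).2.2]

end WDag

end Recon

set_option maxHeartbeats 2000000

/-- Given distinct bad events B_1, …, B_s, the total weight of all
witness DAGs having exactly s sink nodes labeled B_1, …, B_s is at most
Π_i μ(B_i). -/
theorem stmt6 {n : ℕ} {E : Type} [Fintype E] (S : E → Finset (Fin n)) (P : E → ℝ)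
    (hP0 : ∀ b, 0 ≤ P b) (hP1 : ∀ b, P b ≤ 1)
    (hSh : Shearer S P) (s : ℕ) (B : Fin s → E) (hBinj : Function.Injective B) :
    ∑' c : {c : WDag.WClass n E S //
        ∃ G : WDag n E S, Quotient.mk (WDag.wdSetoid n E S) G = c ∧ WDag.SinksAre G B},
      ENNReal.ofReal (WDag.cwt P c.1)
      ≤ ENNReal.ofReal (∏ j : Fin s, Q S P {B j} / Q S P ∅) := by
  classical
  rw [ENNReal.tsum_eq_iSup_sum]
  refine iSup_le fun F => ?_
  obtain ⟨Gc, hc1, hc2⟩ : ∃ Gc : {c : WDag.WClass n E S //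
        ∃ G : WDag n E S, Quotient.mk (WDag.wdSetoid n E S) G = c ∧ WDag.SinksAre G B}
        → WDag n E S,
      (∀ c, Quotient.mk (WDag.wdSetoid n E S) (Gc c) = c.1) ∧ ∀ c, (Gc c).SinksAre B :=
    ⟨fun c => c.2.choose, fun c => c.2.choose_spec.1, fun c => c.2.choose_spec.2⟩
  have hcwt : ∀ c, WDag.cwt P c.1 = WDag.wt P (Gc c) := by
    intro c
    rw [← hc1 c]
    rfl
  have hwt0 : ∀ c, 0 ≤ WDag.wt P (Gc c) :=
    fun c => Finset.prod_nonneg fun v _ => hP0 _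
  have hsum : ∑ c ∈ F, ENNReal.ofReal (WDag.cwt P c.1)
      = ENNReal.ofReal (∑ c ∈ F, WDag.wt P (Gc c)) := by
    rw [ENNReal.ofReal_sum_of_nonneg (fun c _ => hwt0 c)]
    exact Finset.sum_congr rfl fun c _ => by rw [hcwt c]
  rw [hsum]
  refine ENNReal.ofReal_le_ofReal ?_
  obtain ⟨k, hk⟩ : ∃ k, ∀ c ∈ F, (Gc c).size ≤ k :=
    ⟨F.sup (fun c => (Gc c).size), fun c hc => Finset.le_sup (f := fun c => (Gc c).size) hc⟩
  obtain ⟨Φ, hΦ⟩ : ∃ Φ, ∀ c i, Φ c i = WDag.seqT (Gc c) (hc2 c) i :=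
    ⟨fun c i => WDag.seqT (Gc c) (hc2 c) i, fun _ _ => rfl⟩
  obtain ⟨𝔏, h𝔏⟩ : ∃ 𝔏 : Fin s → Finset (List (Finset E)),
      ∀ i, 𝔏 i = F.image (fun c => Φ c i) :=
    ⟨fun i => F.image (fun c => Φ c i), fun _ => rfl⟩
  have hwt : ∀ c, WDag.wt P (Gc c) = ∏ i, wL P (Φ c i) := by
    intro c
    rw [WDag.wt_eq_prod (Gc c) (hc2 c) hBinj P]
    exact Finset.prod_congr rfl fun i _ => by rw [hΦ c i]
  have hinj : ∀ c ∈ F, ∀ c' ∈ F, Φ c = Φ c' → c = c' := by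
    intro c _ c' _ hΦe
    have hiso : WDag.Iso (Gc c) (Gc c') :=
      WDag.iso_of_seqT_eq (Gc c) (Gc c') (hc2 c) (hc2 c') hBinj
        (fun i => by rw [← hΦ c i, ← hΦ c' i, hΦe])
    have heq : Quotient.mk (WDag.wdSetoid n E S) (Gc c)
        = Quotient.mk (WDag.wdSetoid n E S) (Gc c') := Quotient.sound hiso
    exact Subtype.ext (by rw [← hc1 c, ← hc1 c', heq])
  have hvalid : ∀ i : Fin s, ∀ L ∈ 𝔏 i, VS S ({B i} : Finset E) L ∧ L.length ≤ k := by
    intro i L hL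
    rw [h𝔏 i] at hL
    obtain ⟨c, hcF, rfl⟩ := Finset.mem_image.mp hL
    rw [hΦ c i]
    refine ⟨WDag.VS_seqT (Gc c) (hc2 c) hBinj i, ?_⟩
    have hlen : (WDag.seqT (Gc c) (hc2 c) i).length = WDag.Kl (Gc c) (hc2 c) i + 1 := by
      simp [WDag.seqT]
    have h1 := WDag.Kl_lt_size (Gc c) (hc2 c) hBinj i
    have h2 := hk c hcF
    omega
  have s1 : ∑ c ∈ F, WDag.wt P (Gc c) = ∑ c ∈ F, ∏ i, wL P (Φ c i) :=
    Finset.sum_congr rfl fun c _ => hwt c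
  have s2 : ∑ c ∈ F, ∏ i, wL P (Φ c i) = ∑ g ∈ F.image Φ, ∏ i, wL P (g i) :=
    (Finset.sum_image (f := fun g => ∏ i, wL P (g i)) hinj).symm
  have s3 : ∑ g ∈ F.image Φ, ∏ i, wL P (g i)
      ≤ ∑ g ∈ Fintype.piFinset 𝔏, ∏ i, wL P (g i) := by
    refine Finset.sum_le_sum_of_subset_of_nonneg ?_ ?_
    · intro g hg
      obtain ⟨c, hcF, rfl⟩ := Finset.mem_image.mp hg
      refine Fintype.mem_piFinset.mpr fun i => ?_
      rw [h𝔏 i]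
      exact Finset.mem_image.mpr ⟨c, hcF, rfl⟩
    · intro g _ _
      exact Finset.prod_nonneg fun i _ => wL_nonneg P hP0 _
  have s4 : ∑ g ∈ Fintype.piFinset 𝔏, ∏ i, wL P (g i) = ∏ i, ∑ L ∈ 𝔏 i, wL P L :=
    (Finset.prod_univ_sum 𝔏 fun i L => wL P L).symm
  have s5 : ∏ i, ∑ L ∈ 𝔏 i, wL P L ≤ ∏ i, sig S P k {B i} := by
    refine Finset.prod_le_prod (fun i _ => Finset.sum_nonneg fun L _ => wL_nonneg P hP0 L)
      (fun i _ => ?_)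
    exact sum_wL_le S P hP0 k {B i} (𝔏 i) (hvalid i)
  have s6 : ∏ i, sig S P k ({B i} : Finset E) ≤ ∏ j, Q S P {B j} / Q S P ∅ := by
    refine Finset.prod_le_prod (fun i _ => sig_nonneg S P hP0 k _) (fun i _ => ?_)
    exact sig_le_q S P hP0 hP1 hSh k {B i} (indep_singleton S (B i))
  linarith

end LLL
end

section
/- Suppose H_1 and H_2 are both prefixes of a witness DAG G. Then H_1 is consistent with H_2. -/
open scoped Classical

namespace LLL

/-- A finite directed graph with nodes labeled by bad events. -/
structure LGraph (E : Type) where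
  V : Type
  fin : Fintype V
  label : V → E
  edge : V → V → Prop

attribute [instance] LGraph.fin

namespace LGraph

variable {n : ℕ} {E : Type}

/-- A labeled digraph is a witness DAG: it is acyclic, any two nodes with
dependent labels are joined by an edge (in one direction), and nodes with
non-dependent labels have no edge. -/
def IsWDag (S : E → Finset (Fin n)) (G : LGraph E) : Prop :=
  (∀ v, ¬ Relation.TransGen G.edge v v) ∧
  (∀ v w, G.edge v w → Dep S (G.label v) (G.label w)) ∧
  (∀ v w : G.V, v ≠ w → Dep S (G.label v) (G.label w) → G.edge v w ∨ G.edge w v)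

/-- A node is a sink if it has no outgoing edge. -/
def IsSink (G : LGraph E) (v : G.V) : Prop := ∀ w, ¬ G.edge v w

/-- Induced subgraph on a set of vertices. -/
noncomputable def induce (G : LGraph E) (s : Set G.V) : LGraph E where
  V := s
  fin := (Set.toFinite s).fintype
  label := fun v => G.label v.1
  edge := fun v w => G.edge v.1 w.1

/-- The set of vertices having a directed path to at least one vertex of `s`. -/
def ReachSet (G : LGraph E) (s : Set G.V) : Set G.V :=
  {u | ∃ v ∈ s, Relation.ReflTransGen G.edge u v}

/-- Isomorphism of labeled digraphs. -/
def LIso (G H : LGraph E) : Prop :=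
  ∃ e : G.V ≃ H.V, (∀ v, H.label (e v) = G.label v) ∧
    ∀ v w, H.edge (e v) (e w) ↔ G.edge v w

/-- `G` is a prefix of `H`: `G` is (isomorphic to) the subgraph of `H` induced
on all vertices having a path to a given set of vertices. -/
def IsPrefix (G H : LGraph E) : Prop :=
  ∃ s : Set H.V, LIso G (H.induce (H.ReachSet s))

/-- The position of node v among the nodes with the same label (the number of
same-labeled nodes strictly preceding it). -/
noncomputable def pos (G : LGraph E) (v : G.V) : ℕ :=
  (Finset.univ.filter fun u => G.label u = G.label v ∧ Relation.TransGen G.edge u v).card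

/-- The node v has extended label bk = (B, k). -/
def HasExt (G : LGraph E) (v : G.V) (bk : E × ℕ) : Prop :=
  G.label v = bk.1 ∧ G.pos v = bk.2

/-- The extended label bk = (B, k) occurs in G. -/
def Occurs (G : LGraph E) (bk : E × ℕ) : Prop := ∃ v, G.HasExt v bk

/-- The number of nodes strictly preceding `v` whose label involves variable `i`. -/
noncomputable def vcount (S : E → Finset (Fin n)) (G : LGraph E) (i : Fin n) (v : G.V) : ℕ :=
  (Finset.univ.filter fun u => i ∈ S (G.label u) ∧ Relation.TransGen G.edge u v).card

/-- Position k of the path G[i] of variable i is occupied by a node labeled b. -/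
def VOccurs (S : E → Finset (Fin n)) (G : LGraph E) (i : Fin n) (k : ℕ) (b : E) : Prop :=
  ∃ v, i ∈ S (G.label v) ∧ vcount S G i v = k ∧ G.label v = b

/-- G[i] is an initial segment of G'[i] (as labeled ordered graphs). -/
def InitSeg (S : E → Finset (Fin n)) (G G' : LGraph E) (i : Fin n) : Prop :=
  ∀ k b, VOccurs S G i k b → VOccurs S G' i k b

/-- Witness DAGs G, G' are consistent: for each variable i, either G[i] is an
initial segment of G'[i] or vice versa. -/
def Consistent (S : E → Finset (Fin n)) (G G' : LGraph E) : Prop :=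
  ∀ i : Fin n, InitSeg S G G' i ∨ InitSeg S G' G i

/-- The merge G ∨ G' of two witness DAGs: one node for each extended label
occurring in G or G', with an edge between two extended labels iff G or G' has
an edge between nodes with those extended labels. -/
noncomputable def merge (G G' : LGraph E) : LGraph E where
  V := {bk : E × ℕ // G.Occurs bk ∨ G'.Occurs bk}
  fin := by
    have hsub : {bk : E × ℕ | G.Occurs bk ∨ G'.Occurs bk} ⊆
        (Set.range fun v : G.V => (G.label v, G.pos v)) ∪
        (Set.range fun v : G'.V => (G'.label v, G'.pos v)) := by
      rintro bk (⟨v, hv1, hv2⟩ | ⟨v, hv1, hv2⟩)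
      · exact Or.inl ⟨v, by simp [hv1, hv2]⟩
      · exact Or.inr ⟨v, by simp [hv1, hv2]⟩
    exact (((Set.finite_range _).union (Set.finite_range _)).subset hsub).fintype
  label := fun bk => bk.1.1
  edge := fun a b =>
    (∃ v w, G.HasExt v a.1 ∧ G.HasExt w b.1 ∧ G.edge v w) ∨
    (∃ v w, G'.HasExt v a.1 ∧ G'.HasExt w b.1 ∧ G'.edge v w)

/-- A witness DAG G is compatible with a resampling table R: for every node v,
the label of v is true on the configuration read off from R. -/
def Compat {Vl : Type} (S : E → Finset (Fin n)) (Ev : E → (Fin n → Vl) → Prop)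
    (G : LGraph E) (R : Fin n → ℕ → Vl) : Prop :=
  ∀ v : G.V, Ev (G.label v) (fun i => R i (vcount S G i v))

/-- A witness DAG is collectible to b if b is dependent with the labels of all
its sink nodes; it is collectible if it is collectible to some bad event. -/
def Collectible (S : E → Finset (Fin n)) (G : LGraph E) : Prop :=
  ∃ b : E, ∀ v, G.IsSink v → Dep S b (G.label v)

end LGraph


section Aux

open Relation

variable {n : ℕ} {E : Type}

lemma transGen_of_iso {G H : LGraph E} (e : G.V ≃ H.V)
    (he : ∀ v w, H.edge (e v) (e w) ↔ G.edge v w) {u v : G.V}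
    (h : TransGen G.edge u v) : TransGen H.edge (e u) (e v) := by
  induction h with
  | single h => exact TransGen.single ((he _ _).2 h)
  | tail _ h ih => exact ih.tail ((he _ _).2 h)

lemma transGen_iff_of_iso {G H : LGraph E} (e : G.V ≃ H.V)
    (he : ∀ v w, H.edge (e v) (e w) ↔ G.edge v w) (u v : G.V) :
    TransGen H.edge (e u) (e v) ↔ TransGen G.edge u v := by
  constructor
  · intro h
    have h2 : ∀ v w : H.V, G.edge (e.symm v) (e.symm w) ↔ H.edge v w := by
      intro v w
      rw [← he]
      simp
    have := transGen_of_iso e.symm h2 h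
    simpa using this
  · exact transGen_of_iso e he

lemma vcount_iso (S : E → Finset (Fin n)) {G H : LGraph E} (e : G.V ≃ H.V)
    (hl : ∀ v, H.label (e v) = G.label v)
    (he : ∀ v w, H.edge (e v) (e w) ↔ G.edge v w) (i : Fin n) (v : G.V) :
    LGraph.vcount S H i (e v) = LGraph.vcount S G i v := by
  unfold LGraph.vcount
  apply Finset.card_bij (fun a _ => e.symm a)
  · intro a ha
    simp only [Finset.mem_filter, Finset.mem_univ, true_and] at ha ⊢
    constructor
    · rw [← hl]; simpa using ha.1
    · rw [← transGen_iff_of_iso e he]; simpa using ha.2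
  · intro a _ b _ hab; exact e.symm.injective hab
  · intro b hb
    simp only [Finset.mem_filter, Finset.mem_univ, true_and] at hb ⊢
    exact ⟨e b, ⟨by rw [hl]; exact hb.1, (transGen_iff_of_iso e he _ _).2 hb.2⟩, by simp⟩

lemma transGen_induce_up {G : LGraph E} {T : Set G.V}
    (hT : ∀ u v, G.edge u v → v ∈ T → u ∈ T) {u v : G.V}
    (h : TransGen G.edge u v) :
    v ∈ T → ∃ (hu : u ∈ T) (hv : v ∈ T),
      TransGen (G.induce T).edge ⟨u, hu⟩ ⟨v, hv⟩ := by
  induction h with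
  | @single b h =>
      intro hv
      exact ⟨hT _ _ h hv, hv, TransGen.single h⟩
  | @tail b c hab hbc ih =>
      intro hv
      obtain ⟨hu, hb, ht⟩ := ih (hT _ _ hbc hv)
      exact ⟨hu, hv, ht.tail hbc⟩

lemma transGen_induce_down {G : LGraph E} {T : Set G.V} {u v : (G.induce T).V}
    (h : TransGen (G.induce T).edge u v) : TransGen G.edge u.1 v.1 := by
  induction h with
  | single h => exact TransGen.single h
  | tail _ h ih => exact ih.tail h

lemma vcount_induce (S : E → Finset (Fin n)) {G : LGraph E} {T : Set G.V}
    (hT : ∀ u v, G.edge u v → v ∈ T → u ∈ T) (i : Fin n) (v : (G.induce T).V) :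
    LGraph.vcount S (G.induce T) i v = LGraph.vcount S G i v.1 := by
  unfold LGraph.vcount
  apply Finset.card_bij (fun a _ => a.1)
  · intro a ha
    simp only [Finset.mem_filter, Finset.mem_univ, true_and] at ha ⊢
    exact ⟨ha.1, transGen_induce_down ha.2⟩
  · intro a _ b _ hab; exact Subtype.ext hab
  · intro b hb
    simp only [Finset.mem_filter, Finset.mem_univ, true_and] at hb ⊢
    obtain ⟨hb', hv', ht⟩ := transGen_induce_up hT hb.2 v.2
    exact ⟨⟨b, hb'⟩, ⟨hb.1, ht⟩, rfl⟩

lemma voccurs_prefix (S : E → Finset (Fin n)) {G H : LGraph E} {T : Set G.V}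
    (hT : ∀ u v, G.edge u v → v ∈ T → u ∈ T)
    (hiso : LGraph.LIso H (G.induce T)) (i : Fin n) (k : ℕ) (b : E) :
    LGraph.VOccurs S H i k b ↔
      ∃ v : G.V, v ∈ T ∧ i ∈ S (G.label v) ∧ LGraph.vcount S G i v = k ∧
        G.label v = b := by
  obtain ⟨e, hl, he⟩ := hiso
  have hvc : ∀ w : H.V, LGraph.vcount S H i w = LGraph.vcount S G i (e w).1 := by
    intro w
    rw [← vcount_iso S e hl he i w, vcount_induce S hT]
  have hlb : ∀ w : H.V, G.label (e w).1 = H.label w := fun w => hl w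
  constructor
  · rintro ⟨w, hw1, hw2, hw3⟩
    exact ⟨(e w).1, (e w).2, by rw [hlb]; exact hw1, by rw [← hvc]; exact hw2,
      by rw [hlb]; exact hw3⟩
  · rintro ⟨v, hv, h1, h2, h3⟩
    refine ⟨e.symm ⟨v, hv⟩, ?_, ?_, ?_⟩
    · have := hlb (e.symm ⟨v, hv⟩)
      rw [show (e (e.symm ⟨v, hv⟩)).1 = v from congrArg Subtype.val (e.apply_symm_apply _)] at this
      rw [← this]; exact h1
    · rw [hvc]
      rw [show (e (e.symm ⟨v, hv⟩)).1 = v from congrArg Subtype.val (e.apply_symm_apply _)]; exact h2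
    · have := hlb (e.symm ⟨v, hv⟩)
      rw [show (e (e.symm ⟨v, hv⟩)).1 = v from congrArg Subtype.val (e.apply_symm_apply _)] at this
      rw [← this]; exact h3

end Aux

/-- If H₁ and H₂ are both prefixes of a witness DAG G, then H₁ is
consistent with H₂. -/
theorem stmt13 {n : ℕ} {E : Type} (S : E → Finset (Fin n))
    (G H₁ H₂ : LGraph E) (hG : G.IsWDag S)
    (h1 : H₁.IsPrefix G) (h2 : H₂.IsPrefix G) :
    LGraph.Consistent S H₁ H₂ := by
  obtain ⟨s₁, hiso₁⟩ := h1
  obtain ⟨s₂, hiso₂⟩ := h2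
  have hcl : ∀ (s : Set G.V) (u v : G.V), G.edge u v → v ∈ G.ReachSet s →
      u ∈ G.ReachSet s := by
    rintro s u v huv ⟨t, hts, hvt⟩
    exact ⟨t, hts, Relation.ReflTransGen.head huv hvt⟩
  intro i
  by_cases hc : ∀ v : G.V, v ∈ G.ReachSet s₁ → i ∈ S (G.label v) →
      v ∈ G.ReachSet s₂
  · left
    intro k b hkb
    rw [voccurs_prefix S (hcl s₁) hiso₁] at hkb
    obtain ⟨v, hv, h1', h2', h3'⟩ := hkb
    rw [voccurs_prefix S (hcl s₂) hiso₂]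
    exact ⟨v, hc v hv h1', h1', h2', h3'⟩
  · right
    push_neg at hc
    obtain ⟨v0, hv0T, hv0i, hv0n⟩ := hc
    intro k b hkb
    rw [voccurs_prefix S (hcl s₂) hiso₂] at hkb
    obtain ⟨u, hu, h1', h2', h3'⟩ := hkb
    rw [voccurs_prefix S (hcl s₁) hiso₁]
    have hne : u ≠ v0 := fun h => hv0n (h ▸ hu)
    have hdep : Dep S (G.label u) (G.label v0) :=
      ⟨i, Finset.mem_inter.2 ⟨h1', hv0i⟩⟩
    rcases hG.2.2 u v0 hne hdep with h | h
    · exact ⟨u, hcl s₁ u v0 h hv0T, h1', h2', h3'⟩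
    · exact absurd (hcl s₂ v0 u h hu) hv0n

end LLL
end
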